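/- There exists a constant C such that for all t ≥ 1 with M maximal blocks of 1s in its binary expansion, κ₂(t) ≤ C·M, where κ₂ satisfies κ₂(0)=0, κ₂(2t)=κ₂(t), κ₂(2t+1)=(κ₂(t)+κ₂(t+1))/2+1. -/

import Mathlib

/-- The number of maximal blocks of consecutive 1s in the binary expansion of `t`:
each such block is counted at its most significant bit. -/
def blockCount (t : ℕ) : ℕ :=
  ((Finset.range (t+1)).filter (fun i => t.testBit i = true ∧ t.testBit (i+1) = false)).card

lemma tb_false {t i : ℕ} (h : t ≤ i) : t.testBit i = false := by
  apply Nat.testBit_eq_false_of_lt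
  calc t ≤ i := h
    _ < 2 ^ i := Nat.lt_two_pow_self

lemma bc_eq_sum (t m : ℕ) (h : t < m) :
    blockCount t = ∑ i ∈ Finset.range m,
      (if t.testBit i = true ∧ t.testBit (i+1) = false then 1 else 0) := by
  rw [blockCount, Finset.card_filter]
  apply Finset.sum_subset
  · exact Finset.range_subset_range.2 h
  · intro i _ hi
    simp only [Finset.mem_range, not_lt] at hi
    rw [tb_false (le_trans (Nat.le_of_succ_le hi) (le_refl i))]
    simp

lemma bc_zero : blockCount 0 = 0 := by
  simp [blockCount]

lemma bc_even (u : ℕ) : blockCount (2*u) = blockCount u := by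
  rcases Nat.eq_zero_or_pos u with rfl | hu
  · simp [bc_zero]
  have hstep : ∀ x, (2*u).testBit (x+1) = u.testBit x := fun x => by
    rw [Nat.testBit_add_one]; congr 1; omega
  have h0 : (2*u).testBit 0 = false := by
    rw [Nat.testBit_zero, decide_eq_false_iff_not]; omega
  rw [bc_eq_sum (2*u) (2*u+1) (by omega), Finset.sum_range_succ']
  simp only [hstep, h0]
  rw [← bc_eq_sum u (2*u) (by omega)]
  simp

lemma bc_odd (u : ℕ) :
    blockCount (2*u+1) = blockCount u + (if u % 2 = 0 then 1 else 0) := by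
  have hstep : ∀ x, (2*u+1).testBit (x+1) = u.testBit x := fun x => by
    rw [Nat.testBit_add_one]; congr 1; omega
  have h0 : (2*u+1).testBit 0 = true := by
    rw [Nat.testBit_zero, decide_eq_true_eq]; omega
  rw [bc_eq_sum (2*u+1) (2*u+2) (by omega), Finset.sum_range_succ']
  simp only [hstep, h0]
  rw [← bc_eq_sum u (2*u+1) (by omega), Nat.testBit_zero]
  by_cases hu : u % 2 = 0
  · have : ¬ (u % 2 = 1) := by omega
    simp [hu, this]
  · have : u % 2 = 1 := by omega
    simp [hu, this]

def L (t : ℕ) : ℕ :=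
  if t = 0 then 0
  else if t % 2 = 0 then L (t / 2)
  else if (t / 2) % 2 = 1 then L (t / 2) + 1 else 1
termination_by t
decreasing_by all_goals exact Nat.div_lt_self (Nat.pos_of_ne_zero (by assumption)) one_lt_two

lemma L_even (u : ℕ) (hu : u ≠ 0) : L (2*u) = L u := by
  rw [L]
  have h1 : ¬ 2*u = 0 := by omega
  have h2 : (2*u) % 2 = 0 := by omega
  have h3 : 2*u/2 = u := by omega
  simp [h1, h2, h3]

lemma L_odd (u : ℕ) : L (2*u+1) = if u % 2 = 1 then L u + 1 else 1 := by
  rw [L]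
  have h1 : 2*u+1 ≠ 0 := by omega
  have h2 : ¬ (2*u+1) % 2 = 0 := by omega
  have h3 : (2*u+1)/2 = u := by omega
  simp [h1, h2, h3]

lemma Feven (u : ℕ) (h : u % 2 = 0) :
    blockCount (u+1) ≤ blockCount u + 1 ∧
      (L (u+1) ≠ 1 → blockCount (u+1) ≤ blockCount u) := by
  obtain ⟨v, rfl⟩ : ∃ v, u = 2*v := ⟨u/2, by omega⟩
  rw [show 2*v+1 = 2*v+1 from rfl, bc_odd, bc_even, L_odd]
  by_cases hv : v % 2 = 0
  · have hv1 : ¬ v % 2 = 1 := by omega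
    simp [hv, hv1]
  · have hv1 : v % 2 = 1 := by omega
    have hv0 : ¬ v % 2 = 0 := hv
    simp [hv1, hv0]

lemma Fodd (u : ℕ) (h : u % 2 = 1) :
    blockCount (u+1) ≤ blockCount u ∧
      (L (u+1) ≠ 1 → blockCount (u+1) + 1 ≤ blockCount u) := by
  induction u using Nat.strong_induction_on with
  | _ u ih =>
    obtain ⟨v, rfl⟩ : ∃ v, u = 2*v+1 := ⟨u/2, by omega⟩
    have he : 2*v+1+1 = 2*(v+1) := by ring
    rw [he, bc_even, bc_odd, L_even (v+1) (by omega)]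
    by_cases hv : v % 2 = 0
    · have := Feven v hv
      simp [hv]; omega
    · have hv1 : v % 2 = 1 := by omega
      have := ih v (by omega) hv1
      simp [hv1] at this ⊢; omega

theorem stmt_4 (κ2 : ℕ → ℚ) (h2z : κ2 0 = 0)
    (h2e : ∀ t, κ2 (2*t) = κ2 t)
    (h2o : ∀ t, κ2 (2*t+1) = (κ2 t + κ2 (t+1))/2 + 1) :
    ∃ C : ℚ, ∀ t : ℕ, 1 ≤ t → κ2 t ≤ C * (blockCount t : ℚ) := by
  have k1 : κ2 1 = 2 := by
    have := h2o 0
    rw [h2z] at this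
    norm_num at this
    linarith
  have key : ∀ t : ℕ, 1 ≤ t → κ2 t ≤ 4 * (blockCount t : ℚ) - 4 / 2 ^ (L t) := by
    intro t
    induction t using Nat.strong_induction_on with
    | _ t ih =>
      intro ht
      rcases Nat.even_or_odd t with ⟨u, hu⟩ | ⟨u, hu⟩
      · -- t = 2u, u ≥ 1
        have hu' : t = 2*u := by omega
        subst hu'
        have hu1 : 1 ≤ u := by omega
        rw [h2e, bc_even, L_even u (by omega)]
        exact ih u (by omega) hu1
      · -- t = 2u+1
        have hu' : t = 2*u+1 := by omega
        subst hu'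
        rcases Nat.eq_zero_or_pos u with rfl | hu1
        · -- t = 1
          have hb : blockCount 1 = 1 := by
            have := bc_odd 0
            simpa [blockCount] using this
          have hL : L 1 = 1 := by
            have := L_odd 0
            simpa using this
          rw [show 2*0+1 = 1 from rfl] at *
          rw [hb, hL, k1]
          norm_num
        · have h1 := ih u (by omega) hu1
          have h2 := ih (u+1) (by omega) (by omega)
          have hpos1 : (0:ℚ) < 4 / 2 ^ (L u) := by positivity
          have hpos2 : (0:ℚ) < 4 / 2 ^ (L (u+1)) := by positivity
          rw [h2o, bc_odd, L_odd]
          by_cases hp : u % 2 = 0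
          · -- L t = 1, B t = B u + 1
            have hne : ¬ u % 2 = 1 := by omega
            simp only [hp, hne, if_true, if_false]
            have hF := Feven u hp
            push_cast
            by_cases hL1 : L (u+1) = 1
            · have hb : (blockCount (u+1) : ℚ) ≤ (blockCount u : ℚ) + 1 := by
                exact_mod_cast hF.1
              rw [hL1] at h2
              norm_num at h2 ⊢
              linarith
            · have hb : (blockCount (u+1) : ℚ) ≤ (blockCount u : ℚ) := by
                exact_mod_cast hF.2 hL1
              norm_num
              linarith
          · -- u odd : L t = L u + 1, B t = B u
            have hp1 : u % 2 = 1 := by omega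
            simp only [hp1, hp, if_true, if_false]
            have hF := Fodd u hp1
            have hpow : (4:ℚ) / 2 ^ (L u + 1) = 2 / 2 ^ (L u) := by
              rw [pow_succ]
              field_simp
              ring
            have hfact : (4:ℚ) / 2 ^ (L u) = 2 * (2 / 2 ^ (L u)) := by ring
            push_cast
            rw [hpow]
            by_cases hL1 : L (u+1) = 1
            · have hb : (blockCount (u+1) : ℚ) ≤ (blockCount u : ℚ) := by
                exact_mod_cast hF.1
              rw [hL1] at h2
              norm_num at h2 ⊢
              linarith
            · have hb : (blockCount (u+1) : ℚ) + 1 ≤ (blockCount u : ℚ) := by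
                exact_mod_cast hF.2 hL1
              norm_num
              linarith
  refine ⟨4, fun t ht => ?_⟩
  have := key t ht
  have hpos : (0:ℚ) < 4 / 2 ^ (L t) := by positivity
  linarith
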